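/- With the setup of Theorem 1 and f(x) = ∏_{i=1}^{q₀−1}(q·x^d + C_i) · ∏_{j=1}^{q₁−1}(q·x^d + D_j), for every prime r there exists z coprime to r such that f(z) ≢ 0 (mod r²). -/

import Mathlib

open Polynomial

/-- `a(x) = ∏_{i=1}^{q₀-1} (x + i·q₂·m·(q-1)!)`. -/
noncomputable def aPoly (q₀ q₂ q : ℕ) (m : ℤ) : Polynomial ℤ :=
  ∏ i ∈ Finset.Icc 1 (q₀ - 1), (X + C ((i : ℤ) * q₂ * m * (Nat.factorial (q - 1) : ℤ)))

/-- `b(x) = ∏_{j=1}^{q₁-1} (x + j·m·(q-1)!)`. -/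
noncomputable def bPoly (q₁ q : ℕ) (m : ℤ) : Polynomial ℤ :=
  ∏ j ∈ Finset.Icc 1 (q₁ - 1), (X + C ((j : ℤ) * m * (Nat.factorial (q - 1) : ℤ)))

/-- `G(x) = q · a(x) · b(x)`. -/
noncomputable def GPoly (q₀ q₁ q₂ q : ℕ) (m : ℤ) : Polynomial ℤ :=
  C (q : ℤ) * aPoly q₀ q₂ q m * bPoly q₁ q m

/-- `F₀(x) = ∫₀ˣ G(t) dt`, as a polynomial with rational coefficients. -/
noncomputable def F0 (q₀ q₁ q₂ q : ℕ) (m : ℤ) : Polynomial ℚ :=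
  ∑ k ∈ Finset.range ((GPoly q₀ q₁ q₂ q m).natDegree + 1),
    C (((GPoly q₀ q₁ q₂ q m).coeff k : ℚ) / (k + 1)) * X ^ (k + 1)

private lemma coeff_prod_dvd (s : Finset ℕ) (u : ℕ → ℤ) (c : ℤ) (k : ℕ) :
    c ^ (s.card - k) ∣ (∏ i ∈ s, (X + C (u i * c))).coeff k := by
  rcases le_or_gt k s.card with hk | hk
  · rw [Finset.prod_X_add_C_coeff s _ hk]
    refine Finset.dvd_sum fun t ht => ?_
    rw [Finset.mem_powersetCard] at ht
    rw [← ht.2, Finset.prod_mul_distrib, Finset.prod_const]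
    exact Dvd.dvd.mul_left dvd_rfl _
  · rw [Polynomial.coeff_eq_zero_of_natDegree_lt]
    · exact dvd_zero _
    · calc (∏ i ∈ s, (X + C (u i * c))).natDegree
          ≤ ∑ i ∈ s, (X + C (u i * c)).natDegree := natDegree_prod_le _ _
        _ = ∑ _i ∈ s, 1 := Finset.sum_congr rfl fun i _ => natDegree_X_add_C _
        _ = s.card := by simp
        _ < k := hk

private lemma aPoly_eq (q₀ q₂ q : ℕ) (m : ℤ) :
    aPoly q₀ q₂ q m
      = ∏ i ∈ Finset.Icc 1 (q₀ - 1),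
          (X + C (((i : ℤ) * q₂) * (m * (Nat.factorial (q - 1) : ℤ)))) :=
  Finset.prod_congr rfl fun i _ => by rw [mul_assoc]

private lemma bPoly_eq (q₁ q : ℕ) (m : ℤ) :
    bPoly q₁ q m
      = ∏ j ∈ Finset.Icc 1 (q₁ - 1),
          (X + C ((j : ℤ) * (m * (Nat.factorial (q - 1) : ℤ)))) :=
  Finset.prod_congr rfl fun j _ => by rw [mul_assoc]

private lemma aPoly_monic (q₀ q₂ q : ℕ) (m : ℤ) : (aPoly q₀ q₂ q m).Monic :=
  monic_prod_of_monic _ _ fun _ _ => monic_X_add_C _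

private lemma bPoly_monic (q₁ q : ℕ) (m : ℤ) : (bPoly q₁ q m).Monic :=
  monic_prod_of_monic _ _ fun _ _ => monic_X_add_C _

private lemma aPoly_natDegree (q₀ q₂ q : ℕ) (m : ℤ) :
    (aPoly q₀ q₂ q m).natDegree = q₀ - 1 := by
  rw [aPoly, natDegree_prod_of_monic _ _ fun _ _ => monic_X_add_C _]
  rw [Finset.sum_congr rfl fun i _ => natDegree_X_add_C _]
  simp

private lemma bPoly_natDegree (q₁ q : ℕ) (m : ℤ) :
    (bPoly q₁ q m).natDegree = q₁ - 1 := by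
  rw [bPoly, natDegree_prod_of_monic _ _ fun _ _ => monic_X_add_C _]
  rw [Finset.sum_congr rfl fun i _ => natDegree_X_add_C _]
  simp

private lemma GPoly_coeff_eq (q₀ q₁ q₂ q : ℕ) (m : ℤ) (k : ℕ) :
    (GPoly q₀ q₁ q₂ q m).coeff k
      = (q : ℤ) * (aPoly q₀ q₂ q m * bPoly q₁ q m).coeff k := by
  rw [GPoly, mul_assoc, coeff_C_mul]

private lemma GPoly_natDegree (q₀ q₁ q₂ q : ℕ) (m : ℤ) (hq0 : q ≠ 0)
    (hqeq : q = q₀ + q₁ - 1) (h0 : 1 ≤ q₀) (h1 : 1 ≤ q₁) :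
    (GPoly q₀ q₁ q₂ q m).natDegree = q - 1 := by
  rw [GPoly, mul_assoc, natDegree_C_mul (by exact_mod_cast hq0),
    Monic.natDegree_mul (aPoly_monic q₀ q₂ q m) (bPoly_monic q₁ q m),
    aPoly_natDegree, bPoly_natDegree]
  omega

private lemma GPoly_coeff_top (q₀ q₁ q₂ q : ℕ) (m : ℤ) (hq0 : q ≠ 0)
    (hqeq : q = q₀ + q₁ - 1) (h0 : 1 ≤ q₀) (h1 : 1 ≤ q₁) :
    (GPoly q₀ q₁ q₂ q m).coeff (q - 1) = q := by
  rw [GPoly_coeff_eq]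
  have hmon := (aPoly_monic q₀ q₂ q m).mul (bPoly_monic q₁ q m)
  have hdeg : (aPoly q₀ q₂ q m * bPoly q₁ q m).natDegree = q - 1 := by
    rw [Monic.natDegree_mul (aPoly_monic q₀ q₂ q m) (bPoly_monic q₁ q m),
      aPoly_natDegree, bPoly_natDegree]
    omega
  rw [← hdeg, hmon.coeff_natDegree, mul_one]

private lemma GPoly_coeff_dvd (q₀ q₁ q₂ q : ℕ) (m : ℤ)
    (hqeq : q = q₀ + q₁ - 1) (h0 : 1 ≤ q₀) (h1 : 1 ≤ q₁) (k : ℕ) :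
    (m * (Nat.factorial (q - 1) : ℤ)) ^ (q - 1 - k) ∣ (GPoly q₀ q₁ q₂ q m).coeff k := by
  rw [GPoly_coeff_eq]
  refine Dvd.dvd.mul_left ?_ _
  rw [coeff_mul]
  refine Finset.dvd_sum fun p hp => ?_
  have hpk : p.1 + p.2 = k := Finset.HasAntidiagonal.mem_antidiagonal.mp hp
  by_cases hp1 : q₀ - 1 < p.1
  · rw [coeff_eq_zero_of_natDegree_lt (by rw [aPoly_natDegree]; exact hp1), zero_mul]
    exact dvd_zero _
  by_cases hp2 : q₁ - 1 < p.2
  · rw [show (bPoly q₁ q m).coeff p.2 = 0 from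
        coeff_eq_zero_of_natDegree_lt (by rw [bPoly_natDegree]; exact hp2), mul_zero]
    exact dvd_zero _
  push_neg at hp1 hp2
  have ha : (m * (Nat.factorial (q - 1) : ℤ)) ^ (q₀ - 1 - p.1)
      ∣ (aPoly q₀ q₂ q m).coeff p.1 := by
    rw [aPoly_eq]
    have := coeff_prod_dvd (Finset.Icc 1 (q₀ - 1)) (fun i => (i : ℤ) * q₂)
      (m * (Nat.factorial (q - 1) : ℤ)) p.1
    rwa [Nat.card_Icc, Nat.add_sub_cancel] at this
  have hb : (m * (Nat.factorial (q - 1) : ℤ)) ^ (q₁ - 1 - p.2)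
      ∣ (bPoly q₁ q m).coeff p.2 := by
    rw [bPoly_eq]
    have := coeff_prod_dvd (Finset.Icc 1 (q₁ - 1)) (fun j => (j : ℤ))
      (m * (Nat.factorial (q - 1) : ℤ)) p.2
    rwa [Nat.card_Icc, Nat.add_sub_cancel] at this
  have hexp : q - 1 - k ≤ (q₀ - 1 - p.1) + (q₁ - 1 - p.2) := by omega
  exact dvd_trans (pow_dvd_pow _ hexp) (by rw [pow_add]; exact mul_dvd_mul ha hb)

private lemma master (q₀ q₁ q₂ q : ℕ) (m : ℤ)
    (hq : Nat.Prime q) (hq3 : 3 ≤ q) (hqeq : q = q₀ + q₁ - 1)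
    (h0 : 1 ≤ q₀) (h1 : 1 ≤ q₁)
    (y e : ℤ) (hy : m * (Nat.factorial (q - 1) : ℤ) ∣ y)
    (he : (e : ℚ) * (m : ℚ) = (F0 q₀ q₁ q₂ q m).eval ((y : ℤ) : ℚ)) :
    (∀ r : ℕ, r.Prime → r ≠ q → (r : ℤ) ∣ m * (Nat.factorial (q - 1) : ℤ) →
       (r : ℤ) ^ 2 ∣ m * e) ∧
    ((m * e : ℤ) : ZMod q) = ((y : ℤ) : ZMod q) := by
  have hq0 : q ≠ 0 := by omega
  have hn := GPoly_natDegree q₀ q₁ q₂ q m hq0 hqeq h0 h1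
  have hfq : (Nat.factorial q : ℤ) = (q : ℤ) * (Nat.factorial (q - 1) : ℤ) := by
    rw [← Nat.cast_mul, Nat.mul_factorial_pred (by omega)]
  have hdivq : (Nat.factorial q / q : ℕ) = Nat.factorial (q - 1) := by
    conv_lhs => rw [← Nat.mul_factorial_pred (show q ≠ 0 by omega)]
    rw [Nat.mul_div_cancel_left _ (show 0 < q by omega)]
  have key : e * m * (Nat.factorial q : ℤ)
      = ∑ k ∈ Finset.range ((GPoly q₀ q₁ q₂ q m).natDegree + 1),
          (GPoly q₀ q₁ q₂ q m).coeff k * y ^ (k + 1)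
            * ((Nat.factorial q / (k + 1) : ℕ) : ℤ) := by
    have hQ : ((e * m * (Nat.factorial q : ℤ) : ℤ) : ℚ)
        = ((∑ k ∈ Finset.range ((GPoly q₀ q₁ q₂ q m).natDegree + 1),
            (GPoly q₀ q₁ q₂ q m).coeff k * y ^ (k + 1)
              * ((Nat.factorial q / (k + 1) : ℕ) : ℤ) : ℤ) : ℚ) := by
      rw [Int.cast_mul, Int.cast_mul, he, F0, eval_finset_sum, Finset.sum_mul,
        Int.cast_sum]
      refine Finset.sum_congr rfl fun k hk => ?_
      have hk' : k + 1 ≤ q := by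
        rw [hn] at hk; have := Finset.mem_range.mp hk; omega
      have hdvd : (k + 1) ∣ Nat.factorial q := Nat.dvd_factorial k.succ_pos hk'
      have hcast : ((((Nat.factorial q / (k + 1) : ℕ) : ℤ)) : ℚ)
          = (Nat.factorial q : ℚ) / ((k : ℚ) + 1) := by
        rw [Int.cast_natCast, Nat.cast_div hdvd (by positivity)]
        push_cast; ring
      rw [Int.cast_mul, Int.cast_mul, hcast, eval_mul, eval_pow, eval_C, eval_X,
        Int.cast_pow]
      push_cast
      have hk1 : ((k : ℚ) + 1) ≠ 0 := by positivity
      field_simp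
    exact_mod_cast hQ
  constructor
  · intro r hr hrq hrdvd
    have hry : (r : ℤ) ∣ y := dvd_trans hrdvd hy
    have hbig : ((r : ℤ) ^ 2 * (Nat.factorial q : ℤ)) ∣
        ∑ k ∈ Finset.range ((GPoly q₀ q₁ q₂ q m).natDegree + 1),
          (GPoly q₀ q₁ q₂ q m).coeff k * y ^ (k + 1)
            * ((Nat.factorial q / (k + 1) : ℕ) : ℤ) := by
      refine Finset.dvd_sum fun k hk => ?_
      have hkq : k ≤ q - 1 := by
        rw [hn] at hk; have := Finset.mem_range.mp hk; omega
      by_cases hktop : k = q - 1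
      · subst hktop
        rw [GPoly_coeff_top q₀ q₁ q₂ q m hq0 hqeq h0 h1,
          show q - 1 + 1 = q by omega, hdivq]
        obtain ⟨t, ht⟩ : (r : ℤ) ^ 2 ∣ y ^ q :=
          dvd_trans (pow_dvd_pow_of_dvd hry 2) (pow_dvd_pow y (by omega))
        exact ⟨t, by rw [hfq, ht]; ring⟩
      · have hk1 : k + 1 ≤ q - 1 := by omega
        have hdvd1 := GPoly_coeff_dvd q₀ q₁ q₂ q m hqeq h0 h1 k
        have hdvd2 : (m * (Nat.factorial (q - 1) : ℤ)) ^ (k + 1) ∣ y ^ (k + 1) :=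
          pow_dvd_pow_of_dvd hy _
        have hprod : (m * (Nat.factorial (q - 1) : ℤ)) ^ q
            ∣ (GPoly q₀ q₁ q₂ q m).coeff k * y ^ (k + 1) := by
          have hexp : (q - 1 - k) + (k + 1) = q := by omega
          have h' : (m * (Nat.factorial (q - 1) : ℤ)) ^ ((q - 1 - k) + (k + 1))
              ∣ (GPoly q₀ q₁ q₂ q m).coeff k * y ^ (k + 1) := by
            rw [pow_add]; exact mul_dvd_mul hdvd1 hdvd2
          rwa [hexp] at h'
        have hkfac : ((k : ℤ) + 1) ∣ (Nat.factorial (q - 1) : ℤ) := by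
          exact_mod_cast Int.natCast_dvd_natCast.mpr (Nat.dvd_factorial k.succ_pos hk1)
        have h3 : (r : ℤ) ^ 2 * ((k : ℤ) + 1) ∣ (m * (Nat.factorial (q - 1) : ℤ)) ^ q := by
          have hexp : 2 + (q - 2) = q := by omega
          have h' : (r : ℤ) ^ 2 * ((k : ℤ) + 1)
              ∣ (m * (Nat.factorial (q - 1) : ℤ)) ^ (2 + (q - 2)) := by
            rw [pow_add]
            refine mul_dvd_mul (pow_dvd_pow_of_dvd hrdvd 2) ?_
            exact dvd_trans hkfac (dvd_trans (dvd_mul_left _ m)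
              (dvd_pow dvd_rfl (by omega)))
          rwa [hexp] at h'
        obtain ⟨t, ht⟩ := dvd_trans h3 hprod
        have hcancel : ((Nat.factorial q / (k + 1) : ℕ) : ℤ) * ((k : ℤ) + 1)
            = (Nat.factorial q : ℤ) := by
          push_cast [← Nat.cast_mul]
          exact_mod_cast congrArg (Nat.cast : ℕ → ℤ)
            (Nat.div_mul_cancel (Nat.dvd_factorial k.succ_pos (by omega)))
        exact ⟨t, by rw [ht, ← hcancel]; ring⟩
    rw [← key] at hbig
    obtain ⟨t, ht⟩ := hbig
    refine ⟨t, ?_⟩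
    have hfne : (Nat.factorial q : ℤ) ≠ 0 := by
      exact_mod_cast Nat.factorial_ne_zero q
    refine mul_right_cancel₀ hfne ?_
    calc m * e * (Nat.factorial q : ℤ) = e * m * (Nat.factorial q : ℤ) := by ring
      _ = (r : ℤ) ^ 2 * (Nat.factorial q : ℤ) * t := ht
      _ = (r : ℤ) ^ 2 * t * (Nat.factorial q : ℤ) := by ring
  · rw [hn, Finset.sum_range_succ, GPoly_coeff_top q₀ q₁ q₂ q m hq0 hqeq h0 h1,
      show q - 1 + 1 = q by omega, hdivq] at key
    have hrest : ((q : ℤ) * q) ∣ ∑ k ∈ Finset.range (q - 1),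
        (GPoly q₀ q₁ q₂ q m).coeff k * y ^ (k + 1)
          * ((Nat.factorial q / (k + 1) : ℕ) : ℤ) := by
      refine Finset.dvd_sum fun k hk => ?_
      have hklt : k < q - 1 := Finset.mem_range.mp hk
      have hc : (q : ℤ) ∣ (GPoly q₀ q₁ q₂ q m).coeff k := by
        rw [GPoly_coeff_eq]; exact dvd_mul_right _ _
      have hd : (q : ℤ) ∣ ((Nat.factorial q / (k + 1) : ℕ) : ℤ) := by
        have hnat : q ∣ Nat.factorial q / (k + 1) := by
          have hdvd : (k + 1) ∣ Nat.factorial (q - 1) :=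
            Nat.dvd_factorial k.succ_pos (by omega)
          conv_lhs => skip
          rw [← Nat.mul_factorial_pred (show q ≠ 0 by omega),
            Nat.mul_div_assoc q hdvd]
          exact dvd_mul_right q _
        exact_mod_cast Int.natCast_dvd_natCast.mpr hnat
      exact mul_dvd_mul (hc.mul_right _) hd
    obtain ⟨K, hK⟩ := hrest
    have hqq : (Nat.factorial (q - 1) : ℤ) * (e * m - y ^ q) = (q : ℤ) * K := by
      have hq0' : (q : ℤ) ≠ 0 := by exact_mod_cast hq0
      refine mul_left_cancel₀ hq0' ?_
      linear_combination key + hK - e * m * hfq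
    have hdvd : (q : ℤ) ∣ (e * m - y ^ q) := by
      have hprime : Prime (q : ℤ) := Nat.prime_iff_prime_int.mp hq
      have hnot : ¬ (q : ℤ) ∣ (Nat.factorial (q - 1) : ℤ) := by
        rw [Int.natCast_dvd_natCast]
        intro hcon
        exact absurd ((Nat.Prime.dvd_factorial hq).mp hcon) (by omega)
      rcases hprime.dvd_mul.mp ⟨K, hqq⟩ with h | h
      · exact absurd h hnot
      · exact h
    haveI : Fact q.Prime := ⟨hq⟩
    have hz := (ZMod.intCast_zmod_eq_zero_iff_dvd _ q).mpr hdvd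
    push_cast at hz
    rw [ZMod.pow_card] at hz
    push_cast
    linear_combination hz


private lemma case_large (f : Polynomial ℤ) (r : ℕ) (hr : Nat.Prime r)
    (hdeg : f.natDegree + 1 ≤ r)
    (hlc : ((f.leadingCoeff : ℤ) : ZMod r) ≠ 0) :
    ∃ z : ℤ, IsCoprime z (r : ℤ) ∧ ¬ ((r : ℤ) ^ 2 ∣ f.eval z) := by
  by_contra hcon
  push_neg at hcon
  haveI : Fact r.Prime := ⟨hr⟩
  haveI : NeZero r := ⟨hr.pos.ne'⟩
  set F := f.map (Int.castRingHom (ZMod r)) with hF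
  have hFdeg : F.natDegree = f.natDegree :=
    natDegree_map_of_leadingCoeff_ne_zero _ hlc
  have hF0 : F ≠ 0 := by
    intro h
    apply hlc
    have h2 := coeff_map (Int.castRingHom (ZMod r)) (p := f) f.natDegree
    rw [← hF, h, coeff_zero] at h2
    exact h2.symm
  have hroot : ∀ u : ZMod r, u ≠ 0 → (X - C u) ^ 2 ∣ F := by
    intro u hu
    set z : ℤ := (u.val : ℤ) with hz
    have hzu : ((z : ℤ) : ZMod r) = u := by
      rw [hz]
      push_cast
      rw [ZMod.natCast_val, ZMod.cast_id]
    have hndvd : ¬ (r : ℤ) ∣ z := by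
      intro hd
      apply hu
      rw [← hzu, (ZMod.intCast_zmod_eq_zero_iff_dvd z r).mpr hd]
    have hcop : IsCoprime z (r : ℤ) :=
      (((Nat.prime_iff_prime_int.mp hr).irreducible.coprime_iff_not_dvd).mpr hndvd).symm
    have hcop' : IsCoprime (z + r) (r : ℤ) := by
      have := hcop.add_mul_left_left 1
      rwa [mul_one] at this
    have h2 := hcon z hcop
    have h2' := hcon (z + r) hcop'
    obtain ⟨k, hk⟩ := f.binomExpansion z (r : ℤ)
    have hder : (r : ℤ) ∣ f.derivative.eval z := by
      have hdd : (r : ℤ) ^ 2 ∣ f.eval (z + r) - f.eval z := dvd_sub h2' h2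
      rw [hk] at hdd
      have hsq : (r : ℤ) ^ 2 ∣ f.derivative.eval z * r := by
        have h6 : f.derivative.eval z * r
            = (f.eval z + f.derivative.eval z * r + k * (r : ℤ) ^ 2 - f.eval z)
              - k * (r : ℤ) ^ 2 := by ring
        rw [h6]
        exact dvd_sub hdd ⟨k, mul_comm _ _⟩
      have hr0 : (r : ℤ) ≠ 0 := by exact_mod_cast hr.pos.ne'
      rcases hsq with ⟨t, ht⟩
      refine ⟨t, ?_⟩
      have h7 : f.derivative.eval z * r = (r * t) * r := by
        rw [ht]; ring
      exact mul_right_cancel₀ hr0 h7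
    have hrdvd : (r : ℤ) ∣ f.eval z := dvd_trans (dvd_pow_self _ two_ne_zero) h2
    have hev : F.eval u = 0 := by
      have h8 : F.eval ((Int.castRingHom (ZMod r)) z) = 0 := by
        rw [hF, eval_map, eval₂_hom]
        exact (ZMod.intCast_zmod_eq_zero_iff_dvd _ r).mpr hrdvd
      rwa [show ((Int.castRingHom (ZMod r)) z) = ((z : ℤ) : ZMod r) from rfl,
        hzu] at h8
    have hev' : F.derivative.eval u = 0 := by
      have h8 : F.derivative.eval ((Int.castRingHom (ZMod r)) z) = 0 := by
        rw [hF, derivative_map, eval_map, eval₂_hom]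
        exact (ZMod.intCast_zmod_eq_zero_iff_dvd _ r).mpr hder
      rwa [show ((Int.castRingHom (ZMod r)) z) = ((z : ℤ) : ZMod r) from rfl,
        hzu] at h8
    obtain ⟨g, hg⟩ := (dvd_iff_isRoot.mpr hev : (X - C u) ∣ F)
    have hgu : g.eval u = 0 := by
      have hd : F.derivative = g + (X - C u) * g.derivative := by
        rw [hg, derivative_mul, derivative_sub, derivative_X, derivative_C,
          sub_zero, one_mul]
      have := hev'
      rw [hd, eval_add, eval_mul, eval_sub, eval_X, eval_C, sub_self, zero_mul,
        add_zero] at this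
      exact this
    obtain ⟨g2, hg2⟩ := (dvd_iff_isRoot.mpr hgu : (X - C u) ∣ g)
    exact ⟨g2, by rw [hg, hg2]; ring⟩
  have hcount : ∀ u : ZMod r, u ≠ 0 → 2 ≤ F.roots.count u := by
    intro u hu
    rw [count_roots]
    exact (le_rootMultiplicity_iff hF0).mpr (hroot u hu)
  have hle : (2 • (Finset.univ.erase (0 : ZMod r)).val) ≤ F.roots := by
    rw [Multiset.le_iff_count]
    intro u
    rw [Multiset.count_nsmul]
    by_cases hu : u ∈ Finset.univ.erase (0 : ZMod r)
    · have h5 := hcount u (Finset.ne_of_mem_erase hu)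
      rw [Multiset.count_eq_one_of_mem (Finset.univ.erase (0 : ZMod r)).nodup hu]
      omega
    · rw [Multiset.count_eq_zero_of_notMem hu]
      simp
  have h1 := Multiset.card_le_card hle
  rw [Multiset.card_nsmul] at h1
  have h2 := card_roots' F
  have h3 : (Finset.univ.erase (0 : ZMod r)).card = r - 1 := by
    rw [Finset.card_erase_of_mem (Finset.mem_univ _), Finset.card_univ, ZMod.card]
  rw [show Multiset.card (Finset.univ.erase (0 : ZMod r)).val
      = (Finset.univ.erase (0 : ZMod r)).card from rfl, h3] at h1
  rw [hFdeg] at h2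
  have := hr.two_le
  omega


private lemma factor_deg (q : ℕ) (hq : q ≠ 0) (d : ℕ) (hd : 1 ≤ d) (c : ℤ) :
    (C (q : ℤ) * X ^ d + C c).natDegree = d
      ∧ (C (q : ℤ) * X ^ d + C c).leadingCoeff = (q : ℤ) := by
  have hqz : (q : ℤ) ≠ 0 := by exact_mod_cast hq
  have h1 : (C (q : ℤ) * X ^ d).natDegree = d := natDegree_C_mul_X_pow d _ hqz
  have hdeg : (C (q : ℤ) * X ^ d + C c).natDegree = d := by
    rw [natDegree_add_C, h1]
  refine ⟨hdeg, ?_⟩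
  rw [leadingCoeff, hdeg, coeff_add, coeff_C, if_neg (by omega), coeff_C_mul,
    coeff_X_pow, if_pos rfl, mul_one, add_zero]

/-- For `f(x) = ∏ᵢ (q·x^d + Cᵢ) · ∏ⱼ (q·x^d + Dⱼ)`, for every prime `r` there is a `z`
coprime to `r` with `f(z) ≢ 0 (mod r²)`. -/
theorem exists_unit_nonroot_mod_sq (q₀ q₁ q₂ q : ℕ) (m : ℤ)
    (hq₀ : Nat.Prime q₀) (hq₁ : Nat.Prime q₁) (hlt : q₀ < q₁)
    (hq : Nat.Prime q) (hq3 : 3 ≤ q) (hqeq : q = q₀ + q₁ - 1)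
    (hm : 1 ≤ m) (hmsf : Squarefree m) (hqm : ¬ (q : ℤ) ∣ m)
    (hq₂ : Nat.Prime q₂) (hcong : (q₂ : ℤ) ≡ -1 [ZMOD (q : ℤ)])
    (d : ℕ) (hd : 1 ≤ d)
    (Cf Df : ℕ → ℤ)
    (hC : ∀ i ∈ Finset.Icc 1 (q₀ - 1),
      (Cf i : ℚ) * (m : ℚ) =
        (F0 q₀ q₁ q₂ q m).eval ((-((i : ℤ) * q₂ * m * (Nat.factorial (q - 1) : ℤ)) : ℤ) : ℚ))
    (hD : ∀ j ∈ Finset.Icc 1 (q₁ - 1),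
      (Df j : ℚ) * (m : ℚ) =
        (F0 q₀ q₁ q₂ q m).eval ((-((j : ℤ) * m * (Nat.factorial (q - 1) : ℤ)) : ℤ) : ℚ))
    (hrm : ∀ r : ℕ, Nat.Prime r → q < r → r < d * (q - 1) + 1 → (r : ℤ) ∣ m) :
    ∀ r : ℕ, Nat.Prime r → ∃ z : ℤ, IsCoprime z (r : ℤ) ∧
      ¬ ((r : ℤ) ^ 2 ∣
        ((∏ i ∈ Finset.Icc 1 (q₀ - 1), (C (q : ℤ) * X ^ d + C (Cf i))) *
          ∏ j ∈ Finset.Icc 1 (q₁ - 1), (C (q : ℤ) * X ^ d + C (Df j))).eval z) := by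
  intro r hr
  have hq₀2 := hq₀.two_le
  have hq₁2 := hq₁.two_le
  have hq0 : q ≠ 0 := by omega
  have hmC : ∀ i ∈ Finset.Icc 1 (q₀ - 1),
      (∀ s : ℕ, s.Prime → s ≠ q →
          (s : ℤ) ∣ m * (Nat.factorial (q - 1) : ℤ) → (s : ℤ) ^ 2 ∣ m * Cf i)
        ∧ ((m * Cf i : ℤ) : ZMod q)
          = ((-((i : ℤ) * q₂ * m * (Nat.factorial (q - 1) : ℤ)) : ℤ) : ZMod q) := by
    intro i hi
    refine master q₀ q₁ q₂ q m hq hq3 hqeq (by omega) (by omega)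
      (-((i : ℤ) * q₂ * m * (Nat.factorial (q - 1) : ℤ))) (Cf i) ?_ (hC i hi)
    rw [show (i : ℤ) * q₂ * m * (Nat.factorial (q - 1) : ℤ)
        = ((i : ℤ) * q₂) * (m * (Nat.factorial (q - 1) : ℤ)) by ring]
    exact dvd_neg.mpr (Dvd.dvd.mul_left dvd_rfl _)
  have hmD : ∀ j ∈ Finset.Icc 1 (q₁ - 1),
      (∀ s : ℕ, s.Prime → s ≠ q →
          (s : ℤ) ∣ m * (Nat.factorial (q - 1) : ℤ) → (s : ℤ) ^ 2 ∣ m * Df j)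
        ∧ ((m * Df j : ℤ) : ZMod q)
          = ((-((j : ℤ) * m * (Nat.factorial (q - 1) : ℤ)) : ℤ) : ZMod q) := by
    intro j hj
    refine master q₀ q₁ q₂ q m hq hq3 hqeq (by omega) (by omega)
      (-((j : ℤ) * m * (Nat.factorial (q - 1) : ℤ))) (Df j) ?_ (hD j hj)
    rw [show (j : ℤ) * m * (Nat.factorial (q - 1) : ℤ)
        = (j : ℤ) * (m * (Nat.factorial (q - 1) : ℤ)) by ring]
    exact dvd_neg.mpr (Dvd.dvd.mul_left dvd_rfl _)
  have heval : ((∏ i ∈ Finset.Icc 1 (q₀ - 1), (C (q : ℤ) * X ^ d + C (Cf i))) *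
      ∏ j ∈ Finset.Icc 1 (q₁ - 1), (C (q : ℤ) * X ^ d + C (Df j))).eval 1
      = (∏ i ∈ Finset.Icc 1 (q₀ - 1), ((q : ℤ) + Cf i)) *
        ∏ j ∈ Finset.Icc 1 (q₁ - 1), ((q : ℤ) + Df j) := by
    simp [eval_prod]
  by_cases hrq : r = q
  · subst hrq
    haveI : Fact r.Prime := ⟨hr⟩
    refine ⟨1, isCoprime_one_left, ?_⟩
    intro hdvd
    have hdvd1 : (r : ℤ) ∣ ((∏ i ∈ Finset.Icc 1 (q₀ - 1),
        (C (r : ℤ) * X ^ d + C (Cf i))) *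
        ∏ j ∈ Finset.Icc 1 (q₁ - 1), (C (r : ℤ) * X ^ d + C (Df j))).eval 1 :=
      dvd_trans (dvd_pow_self _ two_ne_zero) hdvd
    rw [heval] at hdvd1
    have hzero := (ZMod.intCast_zmod_eq_zero_iff_dvd _ r).mpr hdvd1
    have hmne : ((m : ℤ) : ZMod r) ≠ 0 := fun h =>
      hqm ((ZMod.intCast_zmod_eq_zero_iff_dvd _ _).mp h)
    have hq2c : ((q₂ : ℕ) : ZMod r) = -1 := by
      have h9 := (ZMod.intCast_eq_intCast_iff _ _ _).mpr hcong
      push_cast at h9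
      exact h9
    revert hzero
    push_cast
    rw [ZMod.natCast_self]
    simp only [zero_add]
    refine fun hzero => ?_
    rcases mul_eq_zero.mp hzero with h | h
    · rcases Finset.prod_eq_zero_iff.mp h with ⟨i, hi, hCfi⟩
      obtain ⟨hi1, hi2⟩ := Finset.mem_Icc.mp hi
      have h2 := (hmC i hi).2
      push_cast at h2
      rw [ZMod.wilsons_lemma, hq2c] at h2
      have hCv : ((Cf i : ℤ) : ZMod r) = -(i : ZMod r) := by
        apply mul_left_cancel₀ hmne
        rw [mul_neg]
        linear_combination h2
      rw [hCv, neg_eq_zero] at hCfi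
      have : r ∣ i := (ZMod.natCast_eq_zero_iff _ _).mp hCfi
      have := Nat.le_of_dvd (by omega) this
      omega
    · rcases Finset.prod_eq_zero_iff.mp h with ⟨j, hj, hDfj⟩
      obtain ⟨hj1, hj2⟩ := Finset.mem_Icc.mp hj
      have h2 := (hmD j hj).2
      push_cast at h2
      rw [ZMod.wilsons_lemma] at h2
      have hDv : ((Df j : ℤ) : ZMod r) = (j : ZMod r) := by
        apply mul_left_cancel₀ hmne
        linear_combination h2
      rw [hDv] at hDfj
      have : r ∣ j := (ZMod.natCast_eq_zero_iff _ _).mp hDfj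
      have := Nat.le_of_dvd (by omega) this
      omega
  · by_cases hrdvd : (r : ℤ) ∣ m * (Nat.factorial (q - 1) : ℤ)
    · -- case (b)
      haveI : Fact r.Prime := ⟨hr⟩
      have hprime : Prime (r : ℤ) := Nat.prime_iff_prime_int.mp hr
      have hkey : ∀ e : ℤ, (r : ℤ) ^ 2 ∣ m * e → (r : ℤ) ∣ e := by
        intro e h
        by_contra hne
        have hrr : (r : ℤ) ∣ m * e := dvd_trans (dvd_pow_self _ two_ne_zero) h
        have h1 : (r : ℤ) ∣ m := (hprime.dvd_mul.mp hrr).resolve_right hne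
        obtain ⟨m', hm'⟩ := h1
        obtain ⟨t, ht⟩ := h
        have hre : (r : ℤ) ≠ 0 := by exact_mod_cast hr.pos.ne'
        have h2 : m' * e = (r : ℤ) * t := by
          apply mul_left_cancel₀ hre
          rw [← mul_assoc, ← hm', ht]; ring
        rcases hprime.dvd_mul.mp ⟨t, h2⟩ with h' | h'
        · obtain ⟨m'', hm''⟩ := h'
          have hu : IsUnit (r : ℤ) := hmsf (r : ℤ) ⟨m'', by rw [hm', hm'']; ring⟩
          rw [Int.isUnit_iff] at hu
          have := hr.two_le
          omega
        · exact absurd h' hne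
      refine ⟨1, isCoprime_one_left, ?_⟩
      intro hdvd
      have hdvd1 : (r : ℤ) ∣ _ := dvd_trans (dvd_pow_self _ two_ne_zero) hdvd
      rw [heval] at hdvd1
      have hzero := (ZMod.intCast_zmod_eq_zero_iff_dvd _ r).mpr hdvd1
      have hqne : ((q : ℕ) : ZMod r) ≠ 0 := by
        intro h
        have := (ZMod.natCast_eq_zero_iff _ _).mp h
        exact hrq ((Nat.prime_dvd_prime_iff_eq hr hq).mp this)
      revert hzero
      push_cast
      refine fun hzero => ?_
      rcases mul_eq_zero.mp hzero with h | h
      · rcases Finset.prod_eq_zero_iff.mp h with ⟨i, hi, hCfi⟩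
        have hrc : (r : ℤ) ∣ Cf i := hkey _ ((hmC i hi).1 r hr hrq hrdvd)
        rw [(ZMod.intCast_zmod_eq_zero_iff_dvd _ _).mpr hrc, add_zero] at hCfi
        exact hqne hCfi
      · rcases Finset.prod_eq_zero_iff.mp h with ⟨j, hj, hDfj⟩
        have hrc : (r : ℤ) ∣ Df j := hkey _ ((hmD j hj).1 r hr hrq hrdvd)
        rw [(ZMod.intCast_zmod_eq_zero_iff_dvd _ _).mpr hrc, add_zero] at hDfj
        exact hqne hDfj
    · -- case (c)
      haveI : Fact r.Prime := ⟨hr⟩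
      have hrN : ¬ (r : ℤ) ∣ ((Nat.factorial (q - 1) : ℕ) : ℤ) := fun h =>
        hrdvd (h.mul_left m)
      have hrm' : ¬ (r : ℤ) ∣ m := fun h => hrdvd (h.mul_right _)
      have hgt : q < r := by
        rcases lt_or_ge q r with h | h
        · exact h
        · exfalso
          apply hrN
          have : r ∣ Nat.factorial (q - 1) :=
            Nat.dvd_factorial hr.pos (by omega)
          exact_mod_cast Int.natCast_dvd_natCast.mpr this
      have hge : d * (q - 1) + 1 ≤ r := by
        by_contra h
        push_neg at h
        exact hrm' (hrm r hr hgt (by omega))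
      have hqr : ((q : ℕ) : ZMod r) ≠ 0 := by
        haveI : NeZero r := ⟨hr.pos.ne'⟩
        intro h
        have := (ZMod.natCast_eq_zero_iff _ _).mp h
        exact hrq ((Nat.prime_dvd_prime_iff_eq hr hq).mp this)
      have hfacne : ∀ c : ℤ, (C (q : ℤ) * X ^ d + C c) ≠ 0 := by
        intro c
        have := (factor_deg q hq0 d hd c).2
        intro h0
        rw [h0, leadingCoeff_zero] at this
        exact (by exact_mod_cast hq0 : (q : ℤ) ≠ 0) this.symm
      have hdegA : (∏ i ∈ Finset.Icc 1 (q₀ - 1),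
          (C (q : ℤ) * X ^ d + C (Cf i))).natDegree = (q₀ - 1) * d := by
        rw [natDegree_prod _ _ fun i _ => hfacne (Cf i)]
        rw [Finset.sum_congr rfl fun i _ => (factor_deg q hq0 d hd (Cf i)).1]
        simp [mul_comm]
      have hdegB : (∏ j ∈ Finset.Icc 1 (q₁ - 1),
          (C (q : ℤ) * X ^ d + C (Df j))).natDegree = (q₁ - 1) * d := by
        rw [natDegree_prod _ _ fun j _ => hfacne (Df j)]
        rw [Finset.sum_congr rfl fun j _ => (factor_deg q hq0 d hd (Df j)).1]
        simp [mul_comm]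
      have hAne : (∏ i ∈ Finset.Icc 1 (q₀ - 1),
          (C (q : ℤ) * X ^ d + C (Cf i))) ≠ 0 :=
        Finset.prod_ne_zero_iff.mpr fun i _ => hfacne (Cf i)
      have hBne : (∏ j ∈ Finset.Icc 1 (q₁ - 1),
          (C (q : ℤ) * X ^ d + C (Df j))) ≠ 0 :=
        Finset.prod_ne_zero_iff.mpr fun j _ => hfacne (Df j)
      have hfdeg : ((∏ i ∈ Finset.Icc 1 (q₀ - 1), (C (q : ℤ) * X ^ d + C (Cf i))) *
          ∏ j ∈ Finset.Icc 1 (q₁ - 1), (C (q : ℤ) * X ^ d + C (Df j))).natDegree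
          = (q₀ - 1) * d + (q₁ - 1) * d := by
        rw [natDegree_mul hAne hBne, hdegA, hdegB]
      have hlc : ((((∏ i ∈ Finset.Icc 1 (q₀ - 1), (C (q : ℤ) * X ^ d + C (Cf i))) *
          ∏ j ∈ Finset.Icc 1 (q₁ - 1),
            (C (q : ℤ) * X ^ d + C (Df j))).leadingCoeff : ℤ) : ZMod r) ≠ 0 := by
        rw [leadingCoeff_mul, leadingCoeff_prod, leadingCoeff_prod]
        rw [Finset.prod_congr rfl fun i _ => (factor_deg q hq0 d hd (Cf i)).2,
          Finset.prod_congr rfl fun j _ => (factor_deg q hq0 d hd (Df j)).2,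
          Finset.prod_const, Finset.prod_const]
        push_cast
        exact mul_ne_zero (pow_ne_zero _ hqr) (pow_ne_zero _ hqr)
      refine case_large _ r hr ?_ hlc
      rw [hfdeg]
      have harith : (q₀ - 1) * d + (q₁ - 1) * d = d * (q - 1) := by
        rw [← add_mul, mul_comm]
        congr 1
        omega
      omega
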